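/- Let l, m ≥ 1 be integers with lm ≥ 2. Let F be the free abelian group on the disjoint union A₁ ⊔ A₂ of two finite sets with |A₁| = l and |A₂| = m, and let R ≤ F be the subgroup generated by the elements a − Σ_{b∈A₂} b for a ∈ A₁ together with the elements a − Σ_{b∈A₁} b for a ∈ A₂. Then F/R is a cyclic group of order lm − 1, and the image in F/R of any element of A₁ generates F/R. (This computes the K-theory group 𝒢_Γ = K₀(𝒜_Γ) ≅ ℤ_{lm−1} for the free product Γ = ℤ_{l+1} * ℤ_{m+1} acting on its Bass–Serre tree.) -/

import Mathlib

/-- Let `l, m ≥ 1` with `lm ≥ 2`. Let `F` be the free abelian group on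
`A₁ ⊔ A₂` with `|A₁| = l`, `|A₂| = m`, and let `R ≤ F` be the subgroup generated by the
elements `a - Σ_{b ∈ A₂} b` for `a ∈ A₁` and `a - Σ_{b ∈ A₁} b` for `a ∈ A₂`. Then `F/R`
is cyclic of order `lm - 1`, generated by the image of any element of `A₁`.
(This computes `K₀(𝒜_Γ) ≅ ℤ_{lm-1}` for `Γ = ℤ_{l+1} * ℤ_{m+1}`.) -/
theorem K_theory_free_product_two {l m : ℕ} (hl : 1 ≤ l) (hm : 1 ≤ m) (hlm : 2 ≤ l * m)
    (A₁ A₂ : Type) [Fintype A₁] [Fintype A₂]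
    (hcard₁ : Fintype.card A₁ = l) (hcard₂ : Fintype.card A₂ = m)
    (R : AddSubgroup ((A₁ ⊕ A₂) →₀ ℤ))
    (hR : R = AddSubgroup.closure
      ((Set.range fun a : A₁ =>
          Finsupp.single (Sum.inl a) (1 : ℤ) - ∑ b : A₂, Finsupp.single (Sum.inr b) (1 : ℤ)) ∪
       (Set.range fun a : A₂ =>
          Finsupp.single (Sum.inr a) (1 : ℤ) - ∑ b : A₁, Finsupp.single (Sum.inl b) (1 : ℤ)))) :
    Nonempty ((((A₁ ⊕ A₂) →₀ ℤ) ⧸ R) ≃+ ZMod (l * m - 1)) ∧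
    ∀ a : A₁, AddSubgroup.closure
      {(QuotientAddGroup.mk (Finsupp.single (Sum.inl a) (1 : ℤ)) : ((A₁ ⊕ A₂) →₀ ℤ) ⧸ R)} = ⊤ := by
  set n := l * m - 1 with hn
  haveI : NeZero n := ⟨by omega⟩
  have hA₁ : Nonempty A₁ := Fintype.card_pos_iff.mp (by omega)
  have hA₂ : Nonempty A₂ := Fintype.card_pos_iff.mp (by omega)
  obtain ⟨b₀⟩ := hA₂
  -- key cast fact
  have hcast : ((l * m : ℕ) : ZMod n) = 1 := by
    have h : l * m = n + 1 := by omega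
    rw [h]
    push_cast
    simp [ZMod.natCast_self]
  -- the homomorphism F →+ ZMod n
  set c : A₁ ⊕ A₂ → ZMod n := Sum.elim (fun _ => (m : ZMod n)) (fun _ => 1) with hc
  set φ : ((A₁ ⊕ A₂) →₀ ℤ) →+ ZMod n :=
    Finsupp.liftAddHom (fun x => zmultiplesHom (ZMod n) (c x)) with hφ
  have hφsingle : ∀ (x : A₁ ⊕ A₂) (k : ℤ), φ (Finsupp.single x k) = k • c x := by
    intro x k; simp [hφ]
  have hφR : ∀ x ∈ R, φ x = 0 := by
    intro x hx
    rw [hR] at hx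
    refine (AddSubgroup.closure_le φ.ker).mpr ?_ hx
    rintro x (⟨a, rfl⟩ | ⟨b, rfl⟩) <;>
      simp only [SetLike.mem_coe, AddMonoidHom.mem_ker, map_sub, map_sum, hφsingle, one_smul,
        hc, Sum.elim_inl, Sum.elim_inr, Finset.sum_const, Finset.card_univ, hcard₁, hcard₂,
        nsmul_eq_mul, mul_one]
    · exact sub_self _
    · rw [sub_eq_zero,
        show ((l : ZMod n) * (m : ZMod n)) = ((l * m : ℕ) : ZMod n) from by push_cast; ring,
        hcast]
  set mk : ((A₁ ⊕ A₂) →₀ ℤ) →+ (((A₁ ⊕ A₂) →₀ ℤ) ⧸ R) := QuotientAddGroup.mk' R with hmk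
  set φbar : (((A₁ ⊕ A₂) →₀ ℤ) ⧸ R) →+ ZMod n := QuotientAddGroup.lift R φ hφR with hφbar
  -- relations in the quotient
  have hrel1 : ∀ a : A₁,
      mk (Finsupp.single (Sum.inl a) 1) = ∑ b : A₂, mk (Finsupp.single (Sum.inr b) 1) := by
    intro a
    rw [← map_sum]
    rw [hmk, QuotientAddGroup.mk'_eq_mk']
    exact ⟨-(Finsupp.single (Sum.inl a) 1 - ∑ b : A₂, Finsupp.single (Sum.inr b) 1),
      by rw [hR]; exact neg_mem (AddSubgroup.subset_closure (Or.inl ⟨a, rfl⟩)), by abel⟩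
  have hrel2 : ∀ b : A₂,
      mk (Finsupp.single (Sum.inr b) 1) = ∑ a : A₁, mk (Finsupp.single (Sum.inl a) 1) := by
    intro b
    rw [← map_sum]
    rw [hmk, QuotientAddGroup.mk'_eq_mk']
    exact ⟨-(Finsupp.single (Sum.inr b) 1 - ∑ a : A₁, Finsupp.single (Sum.inl a) 1),
      by rw [hR]; exact neg_mem (AddSubgroup.subset_closure (Or.inr ⟨b, rfl⟩)), by abel⟩
  set g : (((A₁ ⊕ A₂) →₀ ℤ) ⧸ R) := mk (Finsupp.single (Sum.inr b₀) 1) with hg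
  have hinr : ∀ b : A₂, mk (Finsupp.single (Sum.inr b) 1) = g := by
    intro b; rw [hg, hrel2 b, hrel2 b₀]
  have hinl : ∀ a : A₁, mk (Finsupp.single (Sum.inl a) 1) = m • g := by
    intro a
    rw [hrel1 a, Finset.sum_congr rfl fun b _ => hinr b, Finset.sum_const, Finset.card_univ,
      hcard₂]
  have hlmg : (l * m) • g = g := by
    have h := hrel2 b₀
    rw [Finset.sum_congr rfl fun a _ => hinl a, Finset.sum_const, smul_smul,
      Finset.card_univ, hcard₁, ← hg] at h
    exact h.symm
  have hng : (zmultiplesHom _ g) ((n : ℕ) : ℤ) = 0 := by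
    simp only [zmultiplesHom_apply, natCast_zsmul]
    have h : l * m = n + 1 := by omega
    rw [h, succ_nsmul] at hlmg
    exact add_right_cancel (hlmg.trans (zero_add g).symm)
  set ψ : ZMod n →+ (((A₁ ⊕ A₂) →₀ ℤ) ⧸ R) := ZMod.lift n ⟨zmultiplesHom _ g, hng⟩ with hψ
  have hψint : ∀ z : ℤ, ψ ((z : ZMod n)) = z • g := by
    intro z; simp [hψ]
  -- ψ ∘ φbar = id
  have hleft : ψ.comp φbar = AddMonoidHom.id _ := by
    apply QuotientAddGroup.addMonoidHom_ext
    apply Finsupp.addHom_ext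
    intro x k
    have hsingle : (Finsupp.single x k : (A₁ ⊕ A₂) →₀ ℤ) = k • Finsupp.single x 1 := by
      simp [Finsupp.smul_single]
    simp only [AddMonoidHom.comp_apply, hsingle, map_zsmul]
    congr 1
    show ψ (φbar (mk (Finsupp.single x 1))) = mk (Finsupp.single x 1)
    have hφb : φbar (mk (Finsupp.single x 1)) = c x := by
      show φ (Finsupp.single x 1) = c x
      simp [hφsingle]
    rw [hφb]
    cases x with
    | inl a =>
      rw [hc]
      show ψ ((m : ZMod n)) = _
      rw [show ((m : ZMod n)) = (((m : ℤ)) : ZMod n) from by push_cast; rfl, hψint, hinl a]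
      simp
    | inr b =>
      rw [hc]
      show ψ ((1 : ZMod n)) = _
      rw [show ((1 : ZMod n)) = (((1 : ℤ)) : ZMod n) from by push_cast; rfl, hψint, hinr b]
      simp
  -- φbar ∘ ψ = id
  have hright : φbar.comp ψ = AddMonoidHom.id _ := by
    ext x
    obtain ⟨z, rfl⟩ := ZMod.intCast_surjective x
    simp only [AddMonoidHom.comp_apply, AddMonoidHom.id_apply, hψint, map_zsmul]
    have : φbar g = 1 := by show φ (Finsupp.single (Sum.inr b₀) 1) = 1; simp [hφsingle, hc]
    rw [this]
    simp
  refine ⟨⟨AddMonoidHom.toAddEquiv φbar ψ hleft hright⟩, ?_⟩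
  intro a
  rw [AddSubgroup.eq_top_iff']
  intro x
  set S := AddSubgroup.closure
      {(QuotientAddGroup.mk (Finsupp.single (Sum.inl a) (1 : ℤ)) : ((A₁ ⊕ A₂) →₀ ℤ) ⧸ R)}
    with hS
  have hga : mk (Finsupp.single (Sum.inl a) 1) ∈ S :=
    AddSubgroup.subset_closure (Set.mem_singleton_iff.mpr rfl)
  have hgS : g ∈ S := by
    have hgmem : g = l • (mk (Finsupp.single (Sum.inl a) 1)) := by
      rw [hinl a, smul_smul, hlmg]
    rw [hgmem]
    exact AddSubgroup.nsmul_mem S hga l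
  have hxg : x = ψ (φbar x) := by
    have := congrArg (fun f => f x) hleft
    simpa using this.symm
  obtain ⟨z, hz⟩ := ZMod.intCast_surjective (φbar x)
  rw [hxg, ← hz, hψint]
  exact AddSubgroup.zsmul_mem S hgS z
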